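/- Let κ > 0, E ∈ ℝ, T > 0. The optimal trajectory for the Ornstein–Uhlenbeck process with constant field, dX = (-κX + E)dt + n^{-1/2}dB, starting at γ₀ and ending at γ_T = b, is γ_t = (b - E/κ)·sinh(κt)/sinh(κT) + (γ₀ - E/κ)·sinh(κ(T-t))/sinh(κT) + E/κ, and its path cost (1/2)∫₀^T(γ̇_s + κγ_s - E)² ds equals κ(γ₀ - (b - E/κ)e^{κT} - E/κ)²/(e^{2κT} - 1). -/

import Mathlib

set_option maxHeartbeats 1000000 in
/-- For the OU process with constant field `E`, the trajectory
`γ_t = (b - E/κ) sinh(κt)/sinh(κT) + (γ₀ - E/κ) sinh(κ(T-t))/sinh(κT) + E/κ`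
joins `γ₀` to `b` in time `T`, minimizes the path cost among all C¹ trajectories with
these endpoints, and its cost `(1/2)∫₀ᵀ(γ̇ + κγ - E)² ds` equals
`κ(γ₀ - (b - E/κ)e^{κT} - E/κ)²/(e^{2κT} - 1)`. -/
theorem stmt13 (κ E T b γ₀ : ℝ) (hκ : 0 < κ) (hT : 0 < T)
    (γ : ℝ → ℝ)
    (hγ : ∀ t : ℝ, γ t =
      (b - E / κ) * Real.sinh (κ * t) / Real.sinh (κ * T) +
      (γ₀ - E / κ) * Real.sinh (κ * (T - t)) / Real.sinh (κ * T) + E / κ) :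
    γ 0 = γ₀ ∧ γ T = b ∧
    (1 / 2) * (∫ t in (0:ℝ)..T, (deriv γ t + κ * γ t - E) ^ 2) =
      κ * (γ₀ - (b - E / κ) * Real.exp (κ * T) - E / κ) ^ 2 /
        (Real.exp (2 * κ * T) - 1) ∧
    (∀ η : ℝ → ℝ, ContDiff ℝ 1 η → η 0 = γ₀ → η T = b →
      (1 / 2) * (∫ t in (0:ℝ)..T, (deriv γ t + κ * γ t - E) ^ 2) ≤
      (1 / 2) * (∫ t in (0:ℝ)..T, (deriv η t + κ * η t - E) ^ 2)) := by
  have hκT : 0 < κ * T := mul_pos hκ hT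
  have hS : 0 < Real.sinh (κ * T) := Real.sinh_pos_iff.mpr hκT
  set u : ℝ := Real.exp (κ * T) with hu
  have hu1 : 1 < u := Real.one_lt_exp_iff.mpr hκT
  have hu0 : u ≠ 0 := by positivity
  have hu2 : Real.exp (2 * κ * T) = u ^ 2 := by
    rw [hu, ← Real.exp_nat_mul]; ring_nf
  have hu21 : (0:ℝ) < u ^ 2 - 1 := by nlinarith
  set S : ℝ := Real.sinh (κ * T) with hSdef
  -- derivative of γ
  set γ' : ℝ → ℝ := fun t =>
    (b - E / κ) * (Real.cosh (κ * t) * κ) / S +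
    (γ₀ - E / κ) * (Real.cosh (κ * (T - t)) * (κ * (0 - 1))) / S + 0 with hγ'def
  have hderiv : ∀ t, HasDerivAt γ (γ' t) t := by
    intro t
    have hfun : γ = fun t =>
      (b - E / κ) * Real.sinh (κ * t) / S +
      (γ₀ - E / κ) * Real.sinh (κ * (T - t)) / S + E / κ := funext hγ
    rw [hfun]
    have h1 : HasDerivAt (fun t : ℝ => κ * t) κ t := by
      simpa using (hasDerivAt_id t).const_mul κ
    have h2 : HasDerivAt (fun t : ℝ => κ * (T - t)) (κ * (0 - 1)) t := by
      exact ((hasDerivAt_const t T).sub (hasDerivAt_id t)).const_mul κ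
    have := (((h1.sinh.const_mul (b - E / κ)).div_const S).add
      ((h2.sinh.const_mul (γ₀ - E / κ)).div_const S)).add_const (E / κ)
    simp only [hγ'def]
    simpa using this
  set M : ℝ := 2 * κ * ((b - E / κ) * u - (γ₀ - E / κ)) / (u ^ 2 - 1) with hM
  have hkey : ∀ t, γ' t + κ * γ t - E = M * Real.exp (κ * t) := by
    intro t
    have hx0 : Real.exp (κ * t) ≠ 0 := Real.exp_ne_zero _
    have hTt : Real.exp (κ * (T - t)) = u / Real.exp (κ * t) := by
      rw [hu, ← Real.exp_sub]; ring_nf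
    have hSu : S = (u ^ 2 - 1) / (2 * u) := by
      rw [hSdef, Real.sinh_eq, hu, Real.exp_neg, ← hu]
      field_simp
    have hSne : S ≠ 0 := ne_of_gt hS
    have hune : u ^ 2 - 1 ≠ 0 := ne_of_gt hu21
    rw [hγ t, hγ'def]
    simp only [Real.sinh_eq, Real.cosh_eq, Real.exp_neg, hTt, hSu, hM]
    rw [div_div_eq_mul_div, div_div_eq_mul_div]
    field_simp
    ring
  have hF : ∀ t, deriv γ t + κ * γ t - E = M * Real.exp (κ * t) := by
    intro t; rw [(hderiv t).deriv]; exact hkey t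
  -- the integral value
  have hexp2 : ∀ t : ℝ, (M * Real.exp (κ * t)) ^ 2 = M ^ 2 * Real.exp (2 * κ * t) := by
    intro t
    rw [mul_pow, ← Real.exp_nat_mul]; ring_nf
  have hint : (∫ t in (0:ℝ)..T, (deriv γ t + κ * γ t - E) ^ 2)
      = M ^ 2 * u ^ 2 / (2 * κ) - M ^ 2 * 1 / (2 * κ) := by
    have h1 : (∫ t in (0:ℝ)..T, (deriv γ t + κ * γ t - E) ^ 2)
        = ∫ t in (0:ℝ)..T, M ^ 2 * Real.exp (2 * κ * t) := by
      apply intervalIntegral.integral_congr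
      intro t _
      simp only [hF t, hexp2 t]
    rw [h1]
    have hD : ∀ t ∈ Set.uIcc (0:ℝ) T,
        HasDerivAt (fun t => M ^ 2 * Real.exp (2 * κ * t) / (2 * κ))
          (M ^ 2 * Real.exp (2 * κ * t)) t := by
      intro t _
      have h2 : HasDerivAt (fun t : ℝ => 2 * κ * t) (2 * κ) t := by
        simpa using (hasDerivAt_id t).const_mul (2 * κ)
      have := ((h2.exp.const_mul (M ^ 2)).div_const (2 * κ))
      refine HasDerivAt.congr_deriv this ?_
      have hk2 : (2:ℝ) * κ ≠ 0 := by positivity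
      rw [mul_div_assoc, mul_div_cancel_right₀ _ hk2]
    have hci : IntervalIntegrable (fun t => M ^ 2 * Real.exp (2 * κ * t))
        MeasureTheory.volume 0 T :=
      (Continuous.intervalIntegrable (by continuity) _ _)
    rw [intervalIntegral.integral_eq_sub_of_hasDerivAt hD hci]
    rw [← hu2]
    simp [Real.exp_zero]
  have hγ0 : γ 0 = γ₀ := by
    rw [hγ 0]
    simp only [mul_zero, Real.sinh_zero, sub_zero]
    field_simp
    rw [← hSdef]
    ring
  have hγT : γ T = b := by
    rw [hγ T]
    simp only [sub_self, mul_zero, Real.sinh_zero]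
    field_simp
    rw [← hSdef]
    ring
  refine ⟨hγ0, hγT, ?_, ?_⟩
  · rw [hint, hu2, hM]
    have h1 : γ₀ - (b - E / κ) * u - E / κ = -((b - E / κ) * u - (γ₀ - E / κ)) := by ring
    rw [h1, neg_sq]
    have hune : u ^ 2 - 1 ≠ 0 := ne_of_gt hu21
    generalize (b - E / κ) * u - (γ₀ - E / κ) = N
    field_simp
  · intro η hη hη0 hηT
    set δ : ℝ → ℝ := fun t => η t - γ t with hδ
    have hδd : ∀ t, HasDerivAt δ (deriv η t - γ' t) t := by
      intro t
      exact ((hη.differentiable one_ne_zero t).hasDerivAt).sub (hderiv t)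
    set h : ℝ → ℝ := fun t => deriv η t - γ' t + κ * δ t with hh
    have hηc : Continuous (deriv η) := hη.continuous_deriv le_rfl
    have c1 : Continuous fun t : ℝ => Real.sinh (κ * t) :=
      Real.continuous_sinh.comp (continuous_const.mul continuous_id)
    have c2 : Continuous fun t : ℝ => Real.sinh (κ * (T - t)) :=
      Real.continuous_sinh.comp (continuous_const.mul (continuous_const.sub continuous_id))
    have c3 : Continuous fun t : ℝ => Real.cosh (κ * t) :=
      Real.continuous_cosh.comp (continuous_const.mul continuous_id)
    have c4 : Continuous fun t : ℝ => Real.cosh (κ * (T - t)) :=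
      Real.continuous_cosh.comp (continuous_const.mul (continuous_const.sub continuous_id))
    have hγ'c : Continuous γ' := by
      rw [hγ'def]
      exact (((continuous_const.mul (c3.mul continuous_const)).div_const S).add
        ((continuous_const.mul (c4.mul continuous_const)).div_const S)).add continuous_const
    have hγc : Continuous γ := by
      refine Continuous.congr ?_ (fun t => (hγ t).symm)
      exact (((continuous_const.mul c1).div_const S).add
        ((continuous_const.mul c2).div_const S)).add continuous_const
    have hδc : Continuous δ := (hη.continuous).sub hγc
    have hhc : Continuous h := by
      rw [hh]; exact (hηc.sub hγ'c).add (continuous_const.mul hδc)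
    have hfc : Continuous (fun t : ℝ => M * Real.exp (κ * t)) :=
      continuous_const.mul (Real.continuous_exp.comp (continuous_const.mul continuous_id))
    -- decomposition of the η integrand
    have hdecomp : ∀ t, (deriv η t + κ * η t - E) ^ 2 =
        (M * Real.exp (κ * t)) ^ 2 + (2 * (M * Real.exp (κ * t)) * h t + h t ^ 2) := by
      intro t
      have : deriv η t + κ * η t - E = M * Real.exp (κ * t) + h t := by
        have hk := hkey t
        simp only [hh, hδ]
        linarith [hk]
      rw [this]; ring
    have hint1 : IntervalIntegrable (fun t => (M * Real.exp (κ * t)) ^ 2)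
        MeasureTheory.volume 0 T := (Continuous.intervalIntegrable (hfc.pow 2) _ _)
    have hint3c : Continuous (fun t => 2 * (M * Real.exp (κ * t)) * h t) :=
      (continuous_const.mul hfc).mul hhc
    have hint2 : IntervalIntegrable (fun t => 2 * (M * Real.exp (κ * t)) * h t + h t ^ 2)
        MeasureTheory.volume 0 T :=
      (Continuous.intervalIntegrable (hint3c.add (hhc.pow 2)) _ _)
    have hint3 : IntervalIntegrable (fun t => 2 * (M * Real.exp (κ * t)) * h t)
        MeasureTheory.volume 0 T :=
      (Continuous.intervalIntegrable hint3c _ _)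
    have hint4 : IntervalIntegrable (fun t => h t ^ 2)
        MeasureTheory.volume 0 T :=
      (Continuous.intervalIntegrable (hhc.pow 2) _ _)
    -- cross term vanishes
    have hcross : (∫ t in (0:ℝ)..T, 2 * (M * Real.exp (κ * t)) * h t) = 0 := by
      have hD : ∀ t ∈ Set.uIcc (0:ℝ) T,
          HasDerivAt (fun t => 2 * M * (Real.exp (κ * t) * δ t))
            (2 * (M * Real.exp (κ * t)) * h t) t := by
        intro t _
        have he : HasDerivAt (fun t : ℝ => Real.exp (κ * t)) (Real.exp (κ * t) * κ) t := by
          have h1 : HasDerivAt (fun t : ℝ => κ * t) κ t := by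
            simpa using (hasDerivAt_id t).const_mul κ
          exact h1.exp
        have := ((he.mul (hδd t)).const_mul (2 * M))
        refine HasDerivAt.congr_deriv this ?_
        rw [hh]
        ring
      rw [intervalIntegral.integral_eq_sub_of_hasDerivAt hD hint3]
      have hδ0 : δ 0 = 0 := by simp only [hδ, hη0, hγ0, sub_self]
      have hδT : δ T = 0 := by simp only [hδ, hηT, hγT, sub_self]
      rw [hδ0, hδT]; ring
    have h2 : (∫ t in (0:ℝ)..T, (deriv η t + κ * η t - E) ^ 2)
        = (∫ t in (0:ℝ)..T, (M * Real.exp (κ * t)) ^ 2)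
          + ((∫ t in (0:ℝ)..T, 2 * (M * Real.exp (κ * t)) * h t)
            + (∫ t in (0:ℝ)..T, h t ^ 2)) := by
      rw [← intervalIntegral.integral_add hint3 hint4,
        ← intervalIntegral.integral_add hint1 hint2]
      apply intervalIntegral.integral_congr
      intro t _
      exact hdecomp t
    have h3 : (∫ t in (0:ℝ)..T, (deriv γ t + κ * γ t - E) ^ 2)
        = ∫ t in (0:ℝ)..T, (M * Real.exp (κ * t)) ^ 2 := by
      apply intervalIntegral.integral_congr
      intro t _
      simp only [hF t]
    have h4 : 0 ≤ ∫ t in (0:ℝ)..T, h t ^ 2 :=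
      intervalIntegral.integral_nonneg hT.le (fun t _ => sq_nonneg _)
    rw [h2, h3, hcross]
    nlinarith
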